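/- Every solution of the generalized Herglotz–Euler–Lagrange equation lifts to a solution of the unified (Lagrangian–Hamiltonian) Herglotz system: let L : ℝ³ → ℝ be differentiable, let q : ℝ → ℝ be differentiable with differentiable derivative v := q', let z : ℝ → ℝ be differentiable with z'(t) = L(q(t),v(t),z(t)), assume t ↦ (∂L/∂z)(q(t),v(t),z(t)) is continuous, t ↦ (∂L/∂v)(q(t),v(t),z(t)) is differentiable, and the generalized Herglotz–Euler–Lagrange equation (d/dt)[(∂L/∂v)(q(t),v(t),z(t))] = (∂L/∂q)(q(t),v(t),z(t)) + (∂L/∂z)(q(t),v(t),z(t))·(∂L/∂v)(q(t),v(t),z(t)) holds for all t. Fix t₀ ∈ ℝ and define μ(t) := exp(−∫_{t₀}^{t} (∂L/∂z)(q(s),v(s),z(s)) ds) and p(t) := μ(t)·(∂L/∂v)(q(t),v(t),z(t)). Then μ is nowhere zero and (q, v, z, p, μ) satisfies the unified Herglotz system. -/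

import Mathlib

/-- Partial derivative of the Herglotz Lagrangian `L(q,v,z)` with respect to `q`. -/
noncomputable def Lq (L : ℝ × ℝ × ℝ → ℝ) (q v z : ℝ) : ℝ :=
  deriv (fun s => L (s, v, z)) q

/-- Partial derivative of the Herglotz Lagrangian `L(q,v,z)` with respect to `v`. -/
noncomputable def Lv (L : ℝ × ℝ × ℝ → ℝ) (q v z : ℝ) : ℝ :=
  deriv (fun s => L (q, s, z)) v

/-- Partial derivative of the Herglotz Lagrangian `L(q,v,z)` with respect to `z`. -/
noncomputable def Lz (L : ℝ × ℝ × ℝ → ℝ) (q v z : ℝ) : ℝ :=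
  deriv (fun s => L (q, v, s)) z

/-- The unified (Lagrangian–Hamiltonian) Herglotz system for curves `q, v, z, p, μ`. -/
def UnifiedHerglotz (L : ℝ × ℝ × ℝ → ℝ) (q v z p μ : ℝ → ℝ) : Prop :=
  (∀ t, deriv q t = v t) ∧
  (∀ t, deriv z t = L (q t, v t, z t)) ∧
  (∀ t, deriv μ t = -μ t * Lz L (q t) (v t) (z t)) ∧
  (∀ t, deriv p t = μ t * Lq L (q t) (v t) (z t)) ∧
  (∀ t, p t = μ t * Lv L (q t) (v t) (z t))

/-- Every solution of the generalized Herglotz–Euler–Lagrange equation lifts to a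
solution of the unified Herglotz system, the multiplier being
`μ(t) = exp(−∫_{t₀}^{t} (∂L/∂z)∘Φ)` and the momentum `p = μ·(∂L/∂v)∘Φ`. -/
theorem herglotzEulerLagrange_lifts_to_unified
    (L : ℝ × ℝ × ℝ → ℝ) (hL : Differentiable ℝ L)
    (q v z : ℝ → ℝ)
    (hq : Differentiable ℝ q) (hveq : ∀ t, v t = deriv q t) (hv : Differentiable ℝ v)
    (hz : Differentiable ℝ z) (hzeq : ∀ t, deriv z t = L (q t, v t, z t))
    (hLzcont : Continuous (fun t => Lz L (q t) (v t) (z t)))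
    (hLvdiff : Differentiable ℝ (fun t => Lv L (q t) (v t) (z t)))
    (hEL : ∀ t, deriv (fun s => Lv L (q s) (v s) (z s)) t
        = Lq L (q t) (v t) (z t) + Lz L (q t) (v t) (z t) * Lv L (q t) (v t) (z t))
    (t₀ : ℝ)
    (μ : ℝ → ℝ) (hμdef : ∀ t, μ t = Real.exp (-(∫ s in t₀..t, Lz L (q s) (v s) (z s))))
    (p : ℝ → ℝ) (hpdef : ∀ t, p t = μ t * Lv L (q t) (v t) (z t)) :
    (∀ t, μ t ≠ 0) ∧ UnifiedHerglotz L q v z p μ := by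
  set f : ℝ → ℝ := fun t => Lz L (q t) (v t) (z t) with hf
  have hμfun : μ = fun t => Real.exp (-(∫ s in t₀..t, f s)) := funext hμdef
  have hμne : ∀ t, μ t ≠ 0 := fun t => by rw [hμdef]; exact (Real.exp_pos _).ne'
  have hFd : ∀ t, HasDerivAt (fun u => ∫ s in t₀..u, f s) (f t) t := by
    intro t
    exact intervalIntegral.integral_hasDerivAt_right
      (hLzcont.intervalIntegrable _ _)
      (hLzcont.stronglyMeasurableAtFilter _ _)
      hLzcont.continuousAt
  have hμd : ∀ t, HasDerivAt μ (-μ t * f t) t := by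
    intro t
    rw [hμfun]
    have := ((hFd t).neg).exp
    simpa [hμfun, neg_mul, mul_comm] using this
  have hpd : ∀ t, HasDerivAt p (μ t * Lq L (q t) (v t) (z t)) t := by
    intro t
    have hpfun : p = fun t => μ t * Lv L (q t) (v t) (z t) := funext hpdef
    have hLv := (hLvdiff t).hasDerivAt
    rw [hEL t] at hLv
    have := (hμd t).mul hLv
    rw [hpfun]
    convert this using 1
    · rfl
    · rfl
    · rfl
    rw [show f t = Lz L (q t) (v t) (z t) from rfl]
    ring
  refine ⟨hμne, fun t => (hveq t).symm, hzeq, fun t => (hμd t).deriv,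
    fun t => (hpd t).deriv, hpdef⟩
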